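/- Consider the dyadic decomposition used in the Hardy inequality: let G be a finite tree rooted at o, g : E → ℝ nonnegative, and for i ∈ ℤ let B_i = {v : 2^i ≤ ∑_{e∈ℓ(v)} g(e) < 2^{i+1}}. Define g_i(e) = 2^{−i+1} g(e) 𝟙{e₊ ∈ B_{i−1} ∪ B_i}. Then for every v ∈ B_i: ∑_{e∈ℓ(v)} g_i(e) ≥ 1. Consequently ν_{B_i} ≤ 2^{−2i+2} ∑_{e : e₊ ∈ B_{i−1}∪B_i} g(e)². -/

import Mathlib

open Finset

/-- Edges on the path from `o` to `v` in a tree, encoded by their endpoints farther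
from `o`: the vertices `u ≠ o` lying on the path from `o` to `v`. -/
noncomputable def pathE {V : Type*} [Fintype V] [DecidableEq V] (G : SimpleGraph V) (o v : V) :
    Finset V :=
  Finset.univ.filter fun u => u ≠ o ∧ G.dist o u + G.dist u v = G.dist o v

/-- `ν_B`: the infimum of `∑_e f(e)²` over `f : E → ℝ` with `∑_{e ∈ ℓ(v)} f(e) ≥ 1`
for every `v ∈ B` (edges encoded by their far endpoints). -/
noncomputable def nuB {V : Type*} [Fintype V] [DecidableEq V] (G : SimpleGraph V)
    (o : V) (B : Finset V) : ℝ :=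
  sInf {r : ℝ | ∃ f : V → ℝ, (∀ v ∈ B, 1 ≤ ∑ u ∈ pathE G o v, f u) ∧
    r = ∑ u ∈ Finset.univ.filter fun u => u ≠ o, (f u) ^ 2}

open Classical in
/-- The dyadic level set `B_i = {v : 2^i ≤ ∑_{e ∈ ℓ(v)} g(e) < 2^{i+1}}`. -/
noncomputable def Bset {V : Type*} [Fintype V] [DecidableEq V] (G : SimpleGraph V)
    (o : V) (g : V → ℝ) (i : ℤ) : Finset V :=
  Finset.univ.filter fun v =>
    (2 : ℝ) ^ i ≤ ∑ u ∈ pathE G o v, g u ∧ (∑ u ∈ pathE G o v, g u) < (2 : ℝ) ^ (i + 1)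

section TreeAux
open SimpleGraph Walk
variable {V : Type*} [DecidableEq V] {G : SimpleGraph V}

lemma aux_split_dist {o v x : V} (hc : G.Connected) {p : G.Walk o v}
    (hlen : p.length = G.dist o v) (hx : x ∈ p.support) :
    G.dist o x = (p.takeUntil x hx).length ∧ G.dist x v = (p.dropUntil x hx).length := by
  have h1 : G.dist o x ≤ (p.takeUntil x hx).length := SimpleGraph.dist_le _
  have h2 : G.dist x v ≤ (p.dropUntil x hx).length := SimpleGraph.dist_le _
  have hsum : (p.takeUntil x hx).length + (p.dropUntil x hx).length = p.length := by
    rw [← length_append, take_spec]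
  have htri := hc.dist_triangle (u := o) (v := x) (w := v)
  omega

lemma aux_between_dist {o v x : V} (hc : G.Connected) {p : G.Walk o v}
    (hlen : p.length = G.dist o v) (hx : x ∈ p.support) :
    G.dist o x + G.dist x v = G.dist o v := by
  obtain ⟨h1, h2⟩ := aux_split_dist hc hlen hx
  have hsum : (p.takeUntil x hx).length + (p.dropUntil x hx).length = p.length := by
    rw [← length_append, take_spec]
  omega

lemma aux_between_mem {o u v : V} (hG : G.IsTree)
    (h : G.dist o u + G.dist u v = G.dist o v) {p : G.Walk o v} (hp : p.IsPath) :
    u ∈ p.support := by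
  have hc := hG.isConnected
  obtain ⟨q1, hq1, hl1⟩ := hc.exists_path_of_dist o u
  obtain ⟨q2, hq2, hl2⟩ := hc.exists_path_of_dist u v
  have hdisj : ∀ x ∈ q1.support, x ∉ q2.support.tail := by
    intro x hx1 hx2
    have hx2' : x ∈ q2.support := by
      rw [q2.support_eq_cons]; exact List.mem_cons_of_mem _ hx2
    have e1 := aux_between_dist hc hl1 hx1
    have e2 := aux_between_dist hc hl2 hx2'
    have htri := hc.dist_triangle (u := o) (v := x) (w := v)
    have hcomm : G.dist x u = G.dist u x := SimpleGraph.dist_comm ..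
    have hzero : G.dist u x = 0 := by omega
    have : u ∉ q2.support.tail := by
      have hnd : q2.support.Nodup := hq2.support_nodup
      rw [q2.support_eq_cons] at hnd
      exact (List.nodup_cons.1 hnd).1
    rw [show x = u from (hc.dist_eq_zero_iff.1 hzero).symm] at hx2
    exact this hx2
  have hpath : (q1.append q2).IsPath := by
    rw [isPath_def, support_append]
    refine List.Nodup.append hq1.support_nodup ?_ ?_
    · exact (List.nodup_cons.1 (q2.support_eq_cons ▸ hq2.support_nodup)).2
    · exact hdisj
  obtain ⟨r, -, hr⟩ := hG.existsUnique_path o v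
  have h1 : q1.append q2 = p := (hr _ hpath).trans (hr _ hp).symm
  rw [← h1, mem_support_append_iff]
  left; exact q1.end_mem_support

lemma aux_comparable {o u w v : V} (hG : G.IsTree)
    (hu : G.dist o u + G.dist u v = G.dist o v)
    (hw : G.dist o w + G.dist w v = G.dist o v)
    (hle : G.dist o u ≤ G.dist o w) : G.dist o u + G.dist u w = G.dist o w := by
  have hc := hG.isConnected
  obtain ⟨p, hp, hlen⟩ := hc.exists_path_of_dist o v
  have hus : u ∈ p.support := aux_between_mem hG hu hp
  have hws : w ∈ p.support := aux_between_mem hG hw hp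
  obtain ⟨hdow, hdwv⟩ := aux_split_dist hc hlen hws
  rw [← take_spec p hws, mem_support_append_iff] at hus
  rcases hus with hus | hus
  · exact aux_between_dist hc (p := p.takeUntil w hws) hdow.symm hus
  · have e2 := aux_between_dist hc (p := p.dropUntil w hws) hdwv.symm hus
    have hcomm : G.dist w u = G.dist u w := SimpleGraph.dist_comm ..
    have hzero : G.dist w u = 0 := by omega
    have huw : w = u := hc.dist_eq_zero_iff.1 hzero
    subst huw
    omega

end TreeAux

section PathEAux
variable {V : Type*} [Fintype V] [DecidableEq V] {G : SimpleGraph V}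

lemma pathE_mono (hc : G.Connected) {o u v : V} (hu : u ∈ pathE G o v) :
    pathE G o u ⊆ pathE G o v := by
  intro w hw
  simp only [pathE, mem_filter, mem_univ, true_and] at hu hw ⊢
  obtain ⟨hwo, hw⟩ := hw
  refine ⟨hwo, ?_⟩
  have htri1 := hc.dist_triangle (u := w) (v := u) (w := v)
  have htri2 := hc.dist_triangle (u := o) (v := w) (w := v)
  have hcomm : G.dist w u = G.dist u w := SimpleGraph.dist_comm ..
  omega

lemma pathE_self {o u : V} (h : u ≠ o) : u ∈ pathE G o u := by
  simp [pathE, h, SimpleGraph.dist_self]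

lemma pathE_comparable (hG : G.IsTree) {o u w v : V}
    (hu : u ∈ pathE G o v) (hw : w ∈ pathE G o v)
    (hle : G.dist o u ≤ G.dist o w) : u ∈ pathE G o w := by
  simp only [pathE, mem_filter, mem_univ, true_and] at hu hw ⊢
  exact ⟨hu.1, aux_comparable hG hu.2 hw.2 hle⟩

end PathEAux

/-- Dyadic decomposition step of the Hardy inequality: for nonnegative `g` and
`g_i(e) = 2^{-i+1} g(e) 𝟙{e₊ ∈ B_{i-1} ∪ B_i}`, every `v ∈ B_i` satisfies
`∑_{e ∈ ℓ(v)} g_i(e) ≥ 1`; consequently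
`ν_{B_i} ≤ 2^{-2i+2} ∑_{e : e₊ ∈ B_{i-1} ∪ B_i} g(e)²`. -/
theorem dyadic_decomposition_step {V : Type*} [Fintype V] [DecidableEq V]
    (G : SimpleGraph V) (hG : G.IsTree) (o : V) (g : V → ℝ)
    (hg : ∀ u, 0 ≤ g u) (i : ℤ) :
    (∀ v ∈ Bset G o g i, 1 ≤ ∑ u ∈ pathE G o v,
        (if u ∈ Bset G o g (i - 1) ∪ Bset G o g i then (2 : ℝ) ^ (-i + 1) * g u else 0)) ∧
    nuB G o (Bset G o g i) ≤ (2 : ℝ) ^ (-2 * i + 2) *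
      ∑ u ∈ (Finset.univ.filter fun u => u ≠ o) ∩
          (Bset G o g (i - 1) ∪ Bset G o g i), (g u) ^ 2 := by
  classical
  set BU := Bset G o g (i - 1) ∪ Bset G o g i with hBU
  -- key lower bound on the "good" part of the sum
  have key : ∀ v ∈ Bset G o g i,
      (2 : ℝ) ^ (i - 1) ≤ ∑ u ∈ (pathE G o v).filter (· ∈ BU), g u := by
    intro v hv
    rw [Bset, mem_filter] at hv
    obtain ⟨-, hlow, hhigh⟩ := hv
    set T := (pathE G o v).filter (fun u => u ∉ BU) with hT
    have hTbound : ∑ u ∈ T, g u ≤ (2 : ℝ) ^ (i - 1) := by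
      rcases T.eq_empty_or_nonempty with hTe | hTn
      · rw [hTe, Finset.sum_empty]; positivity
      · obtain ⟨m, hmT, hmax⟩ := T.exists_max_image (fun u => G.dist o u) hTn
        have hmP : m ∈ pathE G o v := (mem_filter.1 hmT).1
        have hmBU : m ∉ BU := (mem_filter.1 hmT).2
        have hsub : T ⊆ pathE G o m := by
          intro t ht
          exact pathE_comparable hG (mem_filter.1 ht).1 hmP (hmax t ht)
        have h1 : ∑ u ∈ T, g u ≤ ∑ u ∈ pathE G o m, g u :=
          Finset.sum_le_sum_of_subset_of_nonneg hsub (fun u _ _ => hg u)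
        have h2 : ∑ u ∈ pathE G o m, g u ≤ ∑ u ∈ pathE G o v, g u :=
          Finset.sum_le_sum_of_subset_of_nonneg (pathE_mono hG.isConnected hmP)
            (fun u _ _ => hg u)
        have hm1 : m ∉ Bset G o g (i - 1) := fun h => hmBU (Finset.mem_union_left _ h)
        have hm2 : m ∉ Bset G o g i := fun h => hmBU (Finset.mem_union_right _ h)
        rw [Bset, mem_filter] at hm1 hm2
        push_neg at hm1 hm2
        have he1 : (2 : ℝ) ^ (i - 1 + 1) = (2 : ℝ) ^ i := by ring_nf
        have hSm : ∑ u ∈ pathE G o m, g u < (2 : ℝ) ^ (i + 1) := lt_of_le_of_lt h2 hhigh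
        by_contra hcon
        push_neg at hcon
        have hSm1 : (2 : ℝ) ^ (i - 1) ≤ ∑ u ∈ pathE G o m, g u := le_trans hcon.le h1
        have := hm1 (mem_univ m) hSm1
        rw [he1] at this
        have := hm2 (mem_univ m) this
        exact absurd hSm (not_lt.2 this)
    have hsplit := Finset.sum_filter_add_sum_filter_not (pathE G o v) (· ∈ BU) g
    have he2 : (2 : ℝ) ^ i = 2 ^ (i - 1) * 2 := by
      rw [← zpow_add_one₀ (two_ne_zero)]; ring_nf
    have : ∑ u ∈ (pathE G o v).filter (· ∈ BU), g u
        = (∑ u ∈ pathE G o v, g u) - ∑ u ∈ T, g u := by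
      rw [← hsplit, hT]; ring_nf
    rw [this]
    nlinarith [hTbound, hlow, he2]
  have part1 : ∀ v ∈ Bset G o g i, 1 ≤ ∑ u ∈ pathE G o v,
      (if u ∈ BU then (2 : ℝ) ^ (-i + 1) * g u else 0) := by
    intro v hv
    have hsum : ∑ u ∈ pathE G o v, (if u ∈ BU then (2 : ℝ) ^ (-i + 1) * g u else 0)
        = (2 : ℝ) ^ (-i + 1) * ∑ u ∈ (pathE G o v).filter (· ∈ BU), g u := by
      rw [Finset.mul_sum, Finset.sum_filter]
    rw [hsum]
    have h1 : ((2 : ℝ) ^ (-i + 1)) * (2 : ℝ) ^ (i - 1) = 1 := by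
      rw [← zpow_add₀ (two_ne_zero : (2:ℝ) ≠ 0)]; norm_num
    calc (1 : ℝ) = (2 : ℝ) ^ (-i + 1) * (2 : ℝ) ^ (i - 1) := h1.symm
      _ ≤ _ := by
        have := key v hv
        have hpos : (0:ℝ) < (2 : ℝ) ^ (-i + 1) := by positivity
        nlinarith
  refine ⟨part1, ?_⟩
  apply csInf_le
  · refine ⟨0, ?_⟩
    rintro r ⟨f, -, rfl⟩
    positivity
  · refine ⟨fun u => if u ∈ BU then (2 : ℝ) ^ (-i + 1) * g u else 0, part1, ?_⟩
    have step1 : ∀ u : V, ((if u ∈ BU then (2 : ℝ) ^ (-i + 1) * g u else 0)) ^ 2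
        = (if u ∈ BU then ((2 : ℝ) ^ (-i + 1)) ^ 2 * (g u) ^ 2 else 0) := by
      intro u; split <;> ring
    have hcoef : ((2 : ℝ) ^ (-i + 1)) ^ 2 = (2 : ℝ) ^ (-2 * i + 2) := by
      rw [← zpow_natCast ((2:ℝ) ^ (-i+1)) 2, ← zpow_mul]
      ring_nf
    rw [Finset.mul_sum]
    rw [Finset.sum_congr rfl (fun u _ => step1 u)]
    rw [Finset.sum_ite_mem]
    exact Finset.sum_congr rfl (fun u _ => by rw [hcoef])
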